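/- For all real numbers a and b, the integral over ℝ of Φ(a+bx)·φ(x) dx equals Φ(a/√(1+b²)), where Φ and φ are the standard normal CDF and density respectively. -/

import Mathlib

open Real MeasureTheory

/-- The standard normal probability density function. -/
noncomputable def stdNormalPDF (x : ℝ) : ℝ := Real.exp (-x ^ 2 / 2) / Real.sqrt (2 * Real.pi)

/-- The standard normal cumulative distribution function. -/
noncomputable def stdNormalCDF (t : ℝ) : ℝ := ∫ s in Set.Iic t, stdNormalPDF s

lemma pdf_eq (x : ℝ) : stdNormalPDF x = (Real.sqrt (2 * Real.pi))⁻¹ * Real.exp (-(1/2) * x ^ 2) := by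
  unfold stdNormalPDF; rw [div_eq_inv_mul]; ring_nf

lemma pdf_integrable : Integrable stdNormalPDF := by
  have h : stdNormalPDF = fun x => (Real.sqrt (2 * Real.pi))⁻¹ * Real.exp (-(1/2) * x ^ 2) :=
    funext pdf_eq
  rw [h]
  exact (integrable_exp_neg_mul_sq (by norm_num : (0:ℝ) < 1/2)).const_mul _

lemma pdf_nonneg (x : ℝ) : 0 ≤ stdNormalPDF x := by
  unfold stdNormalPDF
  positivity

lemma pdf_cont : Continuous stdNormalPDF := by
  unfold stdNormalPDF
  fun_prop

/-- shift of the CDF -/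
lemma cdf_shift (a c : ℝ) :
    stdNormalCDF (a + c) = ∫ t in Set.Iic a, stdNormalPDF (t + c) := by
  unfold stdNormalCDF
  rw [← integral_indicator measurableSet_Iic, ← integral_indicator measurableSet_Iic]
  rw [← MeasureTheory.integral_add_right_eq_self
      (fun s => (Set.Iic (a + c)).indicator stdNormalPDF s) c]
  congr 1
  ext t
  by_cases ht : t ≤ a
  · rw [Set.indicator_of_mem (by simpa using ht), Set.indicator_of_mem (by simpa using ht)]
  · rw [Set.indicator_of_notMem (by simpa using ht),
      Set.indicator_of_notMem (by simpa using ht)]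

lemma sqrt_pos' (b : ℝ) : 0 < Real.sqrt (1 + b ^ 2) :=
  Real.sqrt_pos.2 (by positivity)

/-- Gaussian convolution core computation. -/
lemma inner_int (b t : ℝ) :
    ∫ x : ℝ, stdNormalPDF (t + b * x) * stdNormalPDF x
      = (Real.sqrt (1 + b ^ 2))⁻¹ * stdNormalPDF (t / Real.sqrt (1 + b ^ 2)) := by
  have hS : (0:ℝ) < 1 + b ^ 2 := by positivity
  set S : ℝ := 1 + b ^ 2 with hSdef
  have key : ∀ x : ℝ, stdNormalPDF (t + b * x) * stdNormalPDF x
      = Real.exp (-(S/2) * (x + b*t/S) ^ 2) * (Real.exp (-t^2/(2*S)) / (2*Real.pi)) := by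
    intro x
    unfold stdNormalPDF
    rw [div_mul_div_comm, ← Real.exp_add,
      Real.mul_self_sqrt (by positivity : (0:ℝ) ≤ 2 * Real.pi),
      ← mul_div_assoc, ← Real.exp_add]
    congr 2
    field_simp
    ring
  simp_rw [key]
  rw [integral_mul_const,
    MeasureTheory.integral_add_right_eq_self (fun x => Real.exp (-(S/2) * x ^ 2)) (b*t/S),
    integral_gaussian (S/2)]
  have hsq : Real.sqrt S * Real.sqrt S = S := Real.mul_self_sqrt hS.le
  have h2π : Real.sqrt (2*Real.pi) * Real.sqrt (2*Real.pi) = 2*Real.pi :=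
    Real.mul_self_sqrt (by positivity)
  have h1 : Real.sqrt (Real.pi / (S/2)) = Real.sqrt (2*Real.pi) / Real.sqrt S := by
    rw [show Real.pi / (S/2) = (2*Real.pi)/S by field_simp,
      Real.sqrt_div (by positivity)]
  rw [h1]
  unfold stdNormalPDF
  have hexp : -(t / Real.sqrt S) ^ 2 / 2 = -t^2/(2*S) := by
    rw [div_pow, Real.sq_sqrt hS.le, neg_div, div_div, mul_comm S 2, neg_div]
  rw [hexp]
  have hπ : (0:ℝ) < Real.sqrt (2*Real.pi) := Real.sqrt_pos.2 (by positivity)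
  have hs : (0:ℝ) < Real.sqrt S := Real.sqrt_pos.2 hS
  set E : ℝ := Real.exp (-t^2/(2*S)) with hE
  have hd := div_mul_cancel_left₀ hπ.ne' (b := Real.sqrt (2*Real.pi))
  rw [h2π] at hd
  calc Real.sqrt (2*Real.pi) / Real.sqrt S * (E / (2*Real.pi))
      = Real.sqrt (2*Real.pi) / (2*Real.pi) * E * (Real.sqrt S)⁻¹ := by ring
    _ = (Real.sqrt (2*Real.pi))⁻¹ * E * (Real.sqrt S)⁻¹ := by rw [hd]
    _ = (Real.sqrt S)⁻¹ * (E / Real.sqrt (2*Real.pi)) := by ring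

lemma cdf_scale (a b : ℝ) :
    ∫ t in Set.Iic a, (Real.sqrt (1 + b ^ 2))⁻¹ * stdNormalPDF (t / Real.sqrt (1 + b ^ 2))
      = stdNormalCDF (a / Real.sqrt (1 + b ^ 2)) := by
  have hc : (0:ℝ) < Real.sqrt (1 + b ^ 2) := sqrt_pos' b
  set c : ℝ := Real.sqrt (1 + b ^ 2) with hcdef
  unfold stdNormalCDF
  rw [← integral_indicator measurableSet_Iic, ← integral_indicator measurableSet_Iic]
  have key : ∀ t : ℝ, (Set.Iic a).indicator (fun t => c⁻¹ * stdNormalPDF (t / c)) t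
      = c⁻¹ * ((Set.Iic (a / c)).indicator stdNormalPDF) (t / c) := by
    intro t
    by_cases ht : t ≤ a
    · rw [Set.indicator_of_mem (by simpa using ht),
        Set.indicator_of_mem (by simpa using (div_le_div_iff_of_pos_right hc).2 ht)]
    · rw [Set.indicator_of_notMem (by simpa using ht),
        Set.indicator_of_notMem (by simpa using fun h => ht ((div_le_div_iff_of_pos_right hc).1 h)),
        mul_zero]
  simp_rw [key]
  rw [integral_const_mul, MeasureTheory.Measure.integral_comp_div
    (fun u => (Set.Iic (a / c)).indicator stdNormalPDF u) c,
    abs_of_pos hc, smul_eq_mul, ← mul_assoc, inv_mul_cancel₀ hc.ne', one_mul]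

lemma F_integrable (a b : ℝ) :
    Integrable (Function.uncurry fun x t : ℝ =>
      (Set.Iic a).indicator (fun t => stdNormalPDF (t + b * x)) t * stdNormalPDF x)
      (volume.prod volume) := by
  have hmeas : AEStronglyMeasurable (Function.uncurry fun x t : ℝ =>
      (Set.Iic a).indicator (fun t => stdNormalPDF (t + b * x)) t * stdNormalPDF x)
      (volume.prod volume) := by
    have heq : (Function.uncurry fun x t : ℝ =>
        (Set.Iic a).indicator (fun t => stdNormalPDF (t + b * x)) t * stdNormalPDF x)
        = (Set.univ ×ˢ Set.Iic a).indicator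
            (fun p : ℝ × ℝ => stdNormalPDF (p.2 + b * p.1) * stdNormalPDF p.1) := by
      ext ⟨x, t⟩
      by_cases ht : t ≤ a
      · rw [Function.uncurry, Set.indicator_of_mem (by simpa using ht),
          Set.indicator_of_mem (by simp [ht])]
      · rw [Function.uncurry, Set.indicator_of_notMem (by simpa using ht),
          Set.indicator_of_notMem (by simp [ht]), zero_mul]
    rw [heq]
    exact (((pdf_cont.comp (by fun_prop)).mul (pdf_cont.comp continuous_fst)).measurable.indicator
      (MeasurableSet.univ.prod measurableSet_Iic)).aestronglyMeasurable
  rw [MeasureTheory.integrable_prod_iff hmeas]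
  constructor
  · refine Filter.Eventually.of_forall fun x => ?_
    simp only [Function.uncurry_apply_pair]
    exact ((pdf_integrable.comp_add_right (b * x)).indicator measurableSet_Iic).mul_const _
  · have hC : Integrable (fun x : ℝ => (∫ s : ℝ, stdNormalPDF s) * stdNormalPDF x) :=
      pdf_integrable.const_mul _
    refine hC.mono' (hmeas.norm.integral_prod_right') ?_
    refine Filter.Eventually.of_forall fun x => ?_
    have hnn : ∀ t : ℝ, 0 ≤ (Set.Iic a).indicator
        (fun t => stdNormalPDF (t + b * x)) t * stdNormalPDF x := fun t =>
      mul_nonneg (Set.indicator_nonneg (fun s _ => pdf_nonneg _) t) (pdf_nonneg x)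
    have h1 : (fun t : ℝ => ‖(Set.Iic a).indicator
        (fun t => stdNormalPDF (t + b * x)) t * stdNormalPDF x‖)
        = fun t : ℝ => (Set.Iic a).indicator (fun t => stdNormalPDF (t + b * x)) t
            * stdNormalPDF x := by
      funext t; exact Real.norm_of_nonneg (hnn t)
    rw [Real.norm_of_nonneg (integral_nonneg fun t => norm_nonneg _)]
    simp only [Function.uncurry]
    rw [h1, integral_mul_const, integral_indicator measurableSet_Iic]
    have hle : (∫ t in Set.Iic a, stdNormalPDF (t + b * x))
        ≤ ∫ t : ℝ, stdNormalPDF (t + b * x) :=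
      setIntegral_le_integral (pdf_integrable.comp_add_right (b * x))
        (Filter.Eventually.of_forall fun t => pdf_nonneg _)
    have h2 : (∫ t : ℝ, stdNormalPDF (t + b * x)) = ∫ s : ℝ, stdNormalPDF s :=
      MeasureTheory.integral_add_right_eq_self stdNormalPDF (b * x)
    rw [h2] at hle
    exact mul_le_mul_of_nonneg_right hle (pdf_nonneg x)

theorem stmt1 (a b : ℝ) :
    ∫ x : ℝ, stdNormalCDF (a + b * x) * stdNormalPDF x =
      stdNormalCDF (a / Real.sqrt (1 + b ^ 2)) := by
  calc ∫ x : ℝ, stdNormalCDF (a + b * x) * stdNormalPDF x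
      = ∫ x : ℝ, ∫ t : ℝ, (Set.Iic a).indicator
          (fun t => stdNormalPDF (t + b * x)) t * stdNormalPDF x := by
        congr 1; funext x
        rw [cdf_shift, ← integral_indicator measurableSet_Iic, ← integral_mul_const]
    _ = ∫ t : ℝ, ∫ x : ℝ, (Set.Iic a).indicator
          (fun t => stdNormalPDF (t + b * x)) t * stdNormalPDF x :=
        integral_integral_swap (F_integrable a b)
    _ = ∫ t : ℝ, (Set.Iic a).indicator
          (fun t => ∫ x : ℝ, stdNormalPDF (t + b * x) * stdNormalPDF x) t := by
        congr 1; funext t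
        by_cases ht : t ≤ a
        · rw [Set.indicator_of_mem (by simpa using ht)]
          congr 1; funext x
          rw [Set.indicator_of_mem (by simpa using ht)]
        · rw [Set.indicator_of_notMem (by simpa using ht)]
          simp only [Set.indicator_of_notMem (by simpa using ht : t ∉ Set.Iic a), zero_mul,
            integral_zero]
    _ = ∫ t : ℝ, (Set.Iic a).indicator
          (fun t => (Real.sqrt (1 + b ^ 2))⁻¹
            * stdNormalPDF (t / Real.sqrt (1 + b ^ 2))) t := by
        congr 1; funext t
        by_cases ht : t ≤ a
        · rw [Set.indicator_of_mem (by simpa using ht),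
            Set.indicator_of_mem (by simpa using ht), inner_int]
        · rw [Set.indicator_of_notMem (by simpa using ht),
            Set.indicator_of_notMem (by simpa using ht)]
    _ = ∫ t in Set.Iic a, (Real.sqrt (1 + b ^ 2))⁻¹
          * stdNormalPDF (t / Real.sqrt (1 + b ^ 2)) :=
        integral_indicator measurableSet_Iic
    _ = stdNormalCDF (a / Real.sqrt (1 + b ^ 2)) := cdf_scale a b
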